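/- Let χ be an (r+1)-signotope on [n] with a block partition [n] = C₁ ∪ ... ∪ C_r (where every element of C_i is less than every element of C_j whenever i < j). Then the induced grid orientation O_χ on the grid C₁ × ... × C_r is acyclic, where for vertices v, v' differing only in coordinate i with v_i = c < c' = v'_i, the edge is oriented v → v' if χ(v₁,...,v_{i-1}, c, c', v_{i+1},...,v_r) = + and v' → v otherwise. -/

import Mathlib

/-- Number of sign changes in a list of signs (`true` = `+`, `false` = `-`). -/
def signChanges (l : List Bool) : Nat :=
  (l.zip l.tail).countP (fun p => p.1 != p.2)

/-- The sequence of signs obtained from the set `A` by applying `χ` to `A` minus each of its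
elements, deleted in increasing order. -/
def delSeq (chi : Finset Nat -> Bool) (A : Finset Nat) : List Bool :=
  (List.range A.card).map (fun i => chi (((A.sort (fun a b => a <= b)).eraseIdx i).toFinset))

/-- `chi` is an `r`-signotope on ground set `S`: it is a sign map on `r`-subsets such that for
every `(r+1)`-subset `A ⊆ S` the sign sequence `delSeq chi A` has at most one sign change. -/
def IsSignotopeOn (r : Nat) (S : Finset Nat) (chi : Finset Nat -> Bool) : Prop :=
  forall A : Finset Nat, A ⊆ S -> A.card = r + 1 -> signChanges (delSeq chi A) <= 1
/-- `C 0, ..., C (r-1)` is a block partition of `[n] = {1, ..., n}`. -/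
def IsBlockPartition (n r : Nat) (C : Fin r -> Finset Nat) : Prop :=
  Finset.univ.biUnion C = Finset.Icc 1 n ∧
    ∀ i j : Fin r, i < j -> ∀ c ∈ C i, ∀ c' ∈ C j, c < c'

/-- The orientation `O_χ` induced by a block signotope: `blockDir chi C v w` means that both `v`
and `w` are grid vertices (of the grid `C 0 × ⋯ × C (r-1)`), they differ in exactly one
coordinate `i`, and the edge between them is directed from `v` to `w` according to the sign of
`chi` on the `(r+1)`-set consisting of all entries of `v` together with `w i`. -/
def blockDir {r : Nat} (chi : Finset Nat -> Bool) (C : Fin r -> Finset Nat)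
    (v w : Fin r -> Nat) : Prop :=
  (∀ j, v j ∈ C j) ∧ (∀ j, w j ∈ C j) ∧
    ∃ i, (∀ j, j ≠ i -> v j = w j) ∧
      ((v i < w i ∧ chi (insert (w i) (Finset.image v Finset.univ)) = true) ∨
       (w i < v i ∧ chi (insert (w i) (Finset.image v Finset.univ)) = false))

/-- Two tuples are adjacent in the grid iff they differ in exactly one coordinate. -/
def NatAdj {r : Nat} (v w : Fin r -> Nat) : Prop :=
  ∃ i, v i ≠ w i ∧ ∀ j, j ≠ i -> v j = w j

/-- `v` is a sink of the subgrid `S` of `O_χ`: all edges of the subgrid at `v` are incoming. -/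
def IsBlockSink {r : Nat} (chi : Finset Nat -> Bool) (C : Fin r -> Finset Nat)
    (S : Fin r -> Finset Nat) (v : Fin r -> Nat) : Prop :=
  (∀ i, v i ∈ S i) ∧ ∀ w, (∀ i, w i ∈ S i) -> NatAdj v w -> blockDir chi C w v

namespace BDA


/-- Two witnesses give countP ≥ 2. -/
lemma two_le_countP {α : Type*} (p : α → Bool) (l : List α) (j1 j2 : ℕ)
    (h12 : j1 < j2) (h2 : j2 < l.length) (hp1 : p (l[j1]'(by omega)) = true)
    (hp2 : p (l[j2]'h2) = true) : 2 ≤ l.countP p := by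
  induction l generalizing j1 j2 with
  | nil => simp at h2
  | cons x t ih =>
    rw [List.countP_cons]
    rcases Nat.eq_zero_or_pos j1 with h0 | h0
    · subst h0
      simp only [List.getElem_cons_zero] at hp1
      rw [hp1, if_pos rfl]
      have : 1 ≤ t.countP p := by
        rw [Nat.one_le_iff_ne_zero, ← Nat.pos_iff_ne_zero, List.countP_pos_iff]
        refine ⟨t[j2-1]'(by simp at h2; omega), List.getElem_mem _, ?_⟩
        have : (x :: t)[j2] = t[j2-1]'(by simp at h2; omega) := by
          rcases Nat.exists_eq_add_of_lt h12 with ⟨k, hk⟩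
          subst hk; simp
        rwa [this] at hp2
      omega
    · have h1' : 0 < j2 := by omega
      rcases Nat.exists_eq_succ_of_ne_zero (Nat.pos_iff_ne_zero.mp h0) with ⟨a, ha⟩
      rcases Nat.exists_eq_succ_of_ne_zero (Nat.pos_iff_ne_zero.mp h1') with ⟨b, hb⟩
      subst ha; subst hb
      have := ih a b (by omega) (by simp at h2; omega)
        (by simpa using hp1) (by simpa using hp2)
      omega

/-- If two entries differ, some consecutive pair in between differs. -/
lemma exists_change (l : List Bool) (s t : ℕ) (hst : s ≤ t) (ht : t < l.length)
    (hne : l[s]'(by omega) ≠ l[t]'ht) :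
    ∃ j, ∃ _ : j + 1 ≤ t, s ≤ j ∧ l[j]'(by omega) ≠ l[j+1]'(by omega) := by
  induction t with
  | zero =>
      have hs0 : s = 0 := by omega
      subst hs0
      exact absurd rfl hne
  | succ m ih =>
    by_cases hsm : s ≤ m
    · by_cases hch : l[m]'(by omega) = l[m+1]'(by omega)
      · have := ih hsm (by omega) (by rwa [hch])
        rcases this with ⟨j, hj2, hj1, hj3⟩
        exact ⟨j, by omega, hj1, hj3⟩
      · exact ⟨m, le_refl _, hsm, hch⟩
    · have hs : s = m + 1 := by omega
      subst hs
      exact absurd rfl hne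

lemma length_zip_tail (l : List Bool) : (l.zip l.tail).length = l.length - 1 := by
  simp [List.length_zip]

/-- Key: a change at (j, j+1) and a difference between entries j+1 and t (j+1 ≤ t)
forces at least two sign changes. -/
lemma two_le_signChanges (l : List Bool) (j t : ℕ) (hjt : j + 1 ≤ t) (ht : t < l.length)
    (h1 : l[j]'(by omega) ≠ l[j+1]'(by omega)) (h2 : l[j+1]'(by omega) ≠ l[t]'ht) :
    2 ≤ signChanges l := by
  rcases exists_change l (j+1) t hjt ht h2 with ⟨j2, hj2b, hj2a, hj2c⟩
  unfold signChanges
  refine two_le_countP _ _ j j2 (by omega) (by rw [length_zip_tail]; omega) ?_ ?_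
  · have : (l.zip l.tail)[j]'(by rw [length_zip_tail]; omega) =
        (l[j]'(by omega), l.tail[j]'(by simp; omega)) := List.getElem_zip
    rw [this, List.getElem_tail]
    simpa using h1
  · have : (l.zip l.tail)[j2]'(by rw [length_zip_tail]; omega) =
        (l[j2]'(by omega), l.tail[j2]'(by simp; omega)) := List.getElem_zip
    rw [this, List.getElem_tail]
    simpa using hj2c

lemma eraseIdx_toFinset (l : List ℕ) (hl : l.Nodup) (i : ℕ) (hi : i < l.length) :
    (l.eraseIdx i).toFinset = l.toFinset.erase (l[i]'hi) := by
  induction l generalizing i with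
  | nil => simp at hi
  | cons x t ih =>
    rcases Nat.eq_zero_or_pos i with h0 | h0
    · subst h0
      simp only [List.eraseIdx_zero, List.getElem_cons_zero, List.tail_cons, List.toFinset_cons]
      rw [Finset.erase_insert]
      simp only [List.mem_toFinset]
      exact (List.nodup_cons.mp hl).1
    · rcases Nat.exists_eq_succ_of_ne_zero (Nat.pos_iff_ne_zero.mp h0) with ⟨a, ha⟩
      subst ha
      simp only [List.eraseIdx_cons_succ, List.toFinset_cons, List.getElem_cons_succ]
      rw [ih (List.nodup_cons.mp hl).2 a (by simp at hi; omega),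
        Finset.erase_insert_of_ne]
      intro hx
      exact (List.nodup_cons.mp hl).1 (hx ▸ List.getElem_mem _)

/-- delSeq as a map over the sorted list. -/
lemma delSeq_eq_map (chi : Finset ℕ → Bool) (A : Finset ℕ) :
    delSeq chi A = (A.sort (fun a b => a ≤ b)).map (fun x => chi (A.erase x)) := by
  unfold delSeq
  apply List.ext_getElem
  · simp [Finset.length_sort]
  · intro n h1 h2
    simp only [List.getElem_map, List.getElem_range]
    congr 1
    have hn : n < (A.sort (fun a b => a ≤ b)).length := by
      rw [Finset.length_sort]; simpa using h1
    rw [eraseIdx_toFinset _ (Finset.sort_nodup _ _) n hn]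
    rw [Finset.sort_toFinset]

/-- sort of the image of a strictly monotone function is ofFn. -/
lemma sort_image_ofFn {m : ℕ} (g : Fin m → ℕ) (hg : StrictMono g) :
    ((Finset.image g Finset.univ).sort (fun a b => a ≤ b)) = List.ofFn g := by
  refine (fun hp h1 h2 => List.Perm.eq_of_pairwise' (r := fun a b : ℕ => a ≤ b) h1 h2 hp) ?_ ?_ ?_
  · apply List.perm_of_nodup_nodup_toFinset_eq (Finset.sort_nodup _ _)
      (List.nodup_ofFn.mpr hg.injective)
    rw [Finset.sort_toFinset]
    ext x
    simp only [List.mem_toFinset, List.mem_ofFn, Set.mem_range, Finset.mem_image,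
      Finset.mem_univ, true_and]
  · exact Finset.pairwise_sort _ _
  · rw [List.pairwise_iff_getElem]
    intro i j hi hj hij
    simp only [List.getElem_ofFn]
    exact le_of_lt (hg (by simpa [Fin.lt_def] using hij))

lemma signChanges_append_right (l l2 : List Bool) :
    signChanges l ≤ signChanges (l ++ l2) := by
  unfold signChanges
  have hsub : List.Sublist (l.zip l.tail) ((l ++ l2).zip (l ++ l2).tail) := by
    have : (l.zip l.tail) = ((l ++ l2).zip (l ++ l2).tail).take (l.length - 1) := by
      apply List.ext_getElem
      · simp [List.length_zip, List.length_append]; omega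
      · intro n h1 h2
        rw [List.getElem_take]
        rw [List.getElem_zip, List.getElem_zip, List.getElem_tail, List.getElem_tail]
        rw [length_zip_tail] at h1
        congr 1
        · exact (List.getElem_append_left (by omega)).symm
        · exact (List.getElem_append_left (by omega)).symm
    rw [this]
    exact List.take_sublist _ _
  exact List.Sublist.countP_le hsub



open Finset

lemma insert_image_swap {m : ℕ} (u w : Fin m → ℕ) (i : Fin m)
    (h : ∀ j, j ≠ i → u j = w j) :
    insert (w i) (Finset.image u Finset.univ) = insert (u i) (Finset.image w Finset.univ) := by
  ext x
  simp only [mem_insert, mem_image, mem_univ, true_and]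
  constructor
  · rintro (rfl | ⟨j, rfl⟩)
    · exact Or.inr ⟨i, rfl⟩
    · by_cases hj : j = i
      · subst hj; exact Or.inl rfl
      · exact Or.inr ⟨j, (h j hj).symm⟩
  · rintro (rfl | ⟨j, rfl⟩)
    · exact Or.inr ⟨i, rfl⟩
    · by_cases hj : j = i
      · subst hj; exact Or.inl rfl
      · exact Or.inr ⟨j, h j hj⟩

lemma image_eq_insert {m : ℕ} (u : Fin m → ℕ) (i : Fin m) :
    Finset.image u Finset.univ = insert (u i) (Finset.image u (Finset.univ.erase i)) := by
  conv_lhs => rw [← Finset.insert_erase (Finset.mem_univ i)]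
  rw [Finset.image_insert]

lemma image_erase_congr {m : ℕ} (u w : Fin m → ℕ) (i : Fin m)
    (h : ∀ j, j ≠ i → u j = w j) :
    Finset.image u (Finset.univ.erase i) = Finset.image w (Finset.univ.erase i) :=
  Finset.image_congr (fun j hj => h j (Finset.ne_of_mem_erase hj))

theorem absorb {r : ℕ} (S : Finset ℕ) (chi : Finset ℕ → Bool) (C : Fin (r+1) → Finset ℕ)
    (hsig : IsSignotopeOn (r+2) S chi)
    (hord : ∀ i j : Fin (r+1), i < j → ∀ c ∈ C i, ∀ c' ∈ C j, c < c')
    (hsub : ∀ i, C i ⊆ S)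
    (hCne : (C (Fin.last r)).Nonempty)
    (N : ℕ) (hN : N = (C (Fin.last r)).max' hCne)
    (u w : Fin (r+1) → ℕ) (hu : ∀ j, u j ∈ C j) (hw : ∀ j, w j ∈ C j)
    (i : Fin (r+1)) (hagree : ∀ j, j ≠ i → u j = w j) (hpq : u i ≠ w i)
    (hulast : u (Fin.last r) ≠ N) (hwlast : w (Fin.last r) ≠ N)
    (hdir : chi (insert (w i) (Finset.image u Finset.univ)) = decide (u i < w i))
    (hWu : chi (insert N (Finset.image u Finset.univ)) = false)
    (hWw : chi (insert N (Finset.image w Finset.univ)) = true) : False := by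
  classical
  have hNmem : N ∈ C (Fin.last r) := hN ▸ (C (Fin.last r)).max'_mem hCne
  have humono : ∀ j1 j2 : Fin (r+1), j1 < j2 → u j1 < u j2 := fun j1 j2 h =>
    hord j1 j2 h _ (hu j1) _ (hu j2)
  have hwmono : ∀ j1 j2 : Fin (r+1), j1 < j2 → w j1 < w j2 := fun j1 j2 h =>
    hord j1 j2 h _ (hw j1) _ (hw j2)
  have hltN : ∀ (v : Fin (r+1) → ℕ), (∀ j, v j ∈ C j) → v (Fin.last r) ≠ N →
      ∀ j, v j < N := by
    intro v hv hvlast j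
    rcases eq_or_lt_of_le (Fin.le_last j) with hj | hj
    · rw [hj]
      have h1 : v (Fin.last r) ≤ N := hN ▸ Finset.le_max' _ _ (hv (Fin.last r))
      omega
    · exact hord j (Fin.last r) hj _ (hv j) _ hNmem
  have huN : ∀ j, u j < N := hltN u hu hulast
  have hwN : ∀ j, w j < N := hltN w hw hwlast
  set p := u i with hp
  set q := w i with hq
  have hpN : p < N := huN i
  have hqN : q < N := hwN i
  set K := Finset.image u Finset.univ with hK
  have hqK : q ∉ K := by
    intro hmem
    rcases Finset.mem_image.mp hmem with ⟨j, -, hj⟩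
    by_cases hji : j = i
    · subst hji; exact hpq hj
    · rcases lt_trichotomy j i with h | h | h
      · exact absurd ((hagree j hji) ▸ hj) (ne_of_lt (hwmono j i h))
      · exact hji h
      · exact absurd ((hagree j hji) ▸ hj) (ne_of_gt (hwmono i j h))
  have hNK : N ∉ K := by
    intro hmem
    rcases Finset.mem_image.mp hmem with ⟨j, -, hj⟩
    exact absurd hj (ne_of_lt (huN j))
  have hpctx : p ∉ Finset.image u (Finset.univ.erase i) := by
    intro hmem
    rcases Finset.mem_image.mp hmem with ⟨j, hjmem, hj⟩
    have hji : j ≠ i := Finset.ne_of_mem_erase hjmem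
    rcases lt_trichotomy j i with h | h | h
    · exact absurd hj (ne_of_lt (humono j i h))
    · exact hji h
    · exact absurd hj (ne_of_gt (humono i j h))
  have hKerase : K.erase p = Finset.image u (Finset.univ.erase i) := by
    rw [hK, image_eq_insert u i, ← hp, Finset.erase_insert hpctx]
  have hwimg : Finset.image w Finset.univ = insert q (K.erase p) := by
    rw [hKerase, image_eq_insert w i, ← hq, image_erase_congr u w i hagree]
  set A : Finset ℕ := insert N (insert q K) with hA
  have heraseq : A.erase q = insert N K := by
    rw [hA, Finset.insert_comm]
    refine Finset.erase_insert ?_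
    intro hmem
    rcases Finset.mem_insert.mp hmem with h | h
    · omega
    · exact hqK h
  have heraseN : A.erase N = insert q K := by
    rw [hA]
    refine Finset.erase_insert ?_
    intro hmem
    rcases Finset.mem_insert.mp hmem with h | h
    · omega
    · exact hNK h
  have herasep : A.erase p = insert N (Finset.image w Finset.univ) := by
    rw [hA, Finset.erase_insert_of_ne (ne_of_gt hpN),
      Finset.erase_insert_of_ne (Ne.symm hpq), hwimg]
  set s : ℕ := if q < p then (i : ℕ) else (i : ℕ) + 1 with hs
  have his : (i : ℕ) ≤ r := Nat.lt_succ_iff.mp i.isLt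
  have hs_le : s ≤ r + 1 := by rw [hs]; split <;> omega
  have hs_ge : (i : ℕ) ≤ s := by rw [hs]; split <;> omega
  set g : Fin (r+3) → ℕ := fun j =>
    if hj : (j : ℕ) < s then u ⟨(j : ℕ), by omega⟩
    else if (j : ℕ) = s then q
    else if hj' : (j : ℕ) < r + 2 then u ⟨(j : ℕ) - 1, by omega⟩
    else N with hg
  have hg_lo : ∀ (j : Fin (r+3)) (h : (j : ℕ) < s), g j = u ⟨(j : ℕ), by omega⟩ := by
    intro j h
    simp only [hg]
    rw [dif_pos h]
  have hg_s : ∀ (j : Fin (r+3)), (j : ℕ) = s → g j = q := by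
    intro j h
    simp only [hg]
    rw [dif_neg (by omega), if_pos h]
  have hg_mid : ∀ (j : Fin (r+3)) (h1 : s < (j : ℕ)) (h2 : (j : ℕ) < r + 2),
      g j = u ⟨(j : ℕ) - 1, by omega⟩ := by
    intro j h1 h2
    simp only [hg]
    rw [dif_neg (by omega), if_neg (by omega), dif_pos h2]
  have hg_hi : ∀ (j : Fin (r+3)), (j : ℕ) = r + 2 → g j = N := by
    intro j h
    simp only [hg]
    rw [dif_neg (by omega), if_neg (by omega), dif_neg (by omega)]
  have hqu_lt : ∀ (t : ℕ) (h0 : t < r + 1), t < (i : ℕ) → u ⟨t, h0⟩ < q := by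
    intro t h0 ht
    exact hord ⟨t, h0⟩ i (by rw [Fin.lt_def]; exact ht) _ (hu _) _ (hw i)
  have hqu_gt : ∀ (t : ℕ) (h0 : t < r + 1), (i : ℕ) < t → q < u ⟨t, h0⟩ := by
    intro t h0 ht
    exact hord i ⟨t, h0⟩ (by rw [Fin.lt_def]; exact ht) _ (hw i) _ (hu _)
  have hadj : ∀ (t : ℕ) (h1 : t + 1 < r + 3), g ⟨t, by omega⟩ < g ⟨t + 1, h1⟩ := by
    intro t h1
    rcases lt_trichotomy (t+1) s with hc | hc | hc
    · rw [hg_lo ⟨t, by omega⟩ (show t < s by omega),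
        hg_lo ⟨t+1, h1⟩ (show t + 1 < s by omega)]
      exact humono _ _ (by rw [Fin.lt_def]; exact Nat.lt_succ_self t)
    · rw [hg_lo ⟨t, by omega⟩ (show t < s by omega), hg_s ⟨t+1, h1⟩ hc]
      by_cases hqp : q < p
      · have hsi : s = (i : ℕ) := by rw [hs, if_pos hqp]
        exact hqu_lt t (by omega) (by omega)
      · have hsi : s = (i : ℕ) + 1 := by rw [hs, if_neg hqp]
        have hti : t = (i : ℕ) := by omega
        have heq : (⟨t, show t < r + 1 by omega⟩ : Fin (r+1)) = i :=
          Fin.ext (show t = (i : ℕ) by omega)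
        rw [heq]
        have : p < q := by omega
        exact this
    · rcases Nat.eq_or_lt_of_le (show s ≤ t by omega) with h2 | h2
      · rw [hg_s ⟨t, by omega⟩ (show t = s by omega)]
        rcases Nat.lt_or_ge (t+1) (r+2) with h3 | h3
        · rw [hg_mid ⟨t+1, h1⟩ (show s < t + 1 by omega) (show t + 1 < r + 2 by omega)]
          by_cases hqp : q < p
          · have hsi : s = (i : ℕ) := by rw [hs, if_pos hqp]
            have heq : (⟨t + 1 - 1, show t + 1 - 1 < r + 1 by omega⟩ : Fin (r+1)) = i :=
              Fin.ext (show t + 1 - 1 = (i : ℕ) by omega)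
            rw [heq]
            exact hqp
          · have hsi : s = (i : ℕ) + 1 := by rw [hs, if_neg hqp]
            exact hqu_gt (t + 1 - 1) (by omega) (by omega)
        · rw [hg_hi ⟨t+1, h1⟩ (show t + 1 = r + 2 by omega)]
          exact hqN
      · rw [hg_mid ⟨t, by omega⟩ (show s < t by omega) (show t < r + 2 by omega)]
        rcases Nat.lt_or_ge (t+1) (r+2) with h3 | h3
        · rw [hg_mid ⟨t+1, h1⟩ (show s < t + 1 by omega) (show t + 1 < r + 2 by omega)]
          exact humono _ _ (by rw [Fin.lt_def]; show t - 1 < t + 1 - 1; omega)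
        · rw [hg_hi ⟨t+1, h1⟩ (show t + 1 = r + 2 by omega)]
          exact huN _
  have hgmono : StrictMono g := by
    rw [Fin.strictMono_iff_lt_succ]
    intro j0
    exact hadj (j0 : ℕ) (by omega)
  have himg : Finset.image g Finset.univ = A := by
    apply Finset.Subset.antisymm
    · intro x hx
      rcases Finset.mem_image.mp hx with ⟨j, -, rfl⟩
      rcases Nat.lt_trichotomy (j : ℕ) s with h1 | h1 | h1
      · rw [hg_lo j h1, hA]
        exact Finset.mem_insert_of_mem (Finset.mem_insert_of_mem
          (Finset.mem_image_of_mem _ (Finset.mem_univ _)))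
      · rw [hg_s j h1, hA]
        exact Finset.mem_insert_of_mem (Finset.mem_insert_self _ _)
      · rcases Nat.lt_or_ge (j : ℕ) (r+2) with h2 | h2
        · rw [hg_mid j h1 h2, hA]
          exact Finset.mem_insert_of_mem (Finset.mem_insert_of_mem
            (Finset.mem_image_of_mem _ (Finset.mem_univ _)))
        · have hj2 : (j : ℕ) = r + 2 := by omega
          rw [hg_hi j hj2, hA]
          exact Finset.mem_insert_self _ _
    · intro x hx
      rw [hA] at hx
      rcases Finset.mem_insert.mp hx with rfl | hx
      · exact Finset.mem_image.mpr ⟨⟨r+2, by omega⟩, Finset.mem_univ _, hg_hi _ rfl⟩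
      rcases Finset.mem_insert.mp hx with rfl | hx
      · exact Finset.mem_image.mpr ⟨⟨s, by omega⟩, Finset.mem_univ _, hg_s _ rfl⟩
      · rcases Finset.mem_image.mp hx with ⟨t, -, rfl⟩
        rcases Nat.lt_or_ge (t : ℕ) s with h1 | h1
        · refine Finset.mem_image.mpr ⟨⟨(t : ℕ), by omega⟩, Finset.mem_univ _, ?_⟩
          exact (hg_lo _ h1).trans (congrArg u (Fin.ext rfl))
        · refine Finset.mem_image.mpr ⟨⟨(t : ℕ) + 1, by omega⟩, Finset.mem_univ _, ?_⟩
          exact (hg_mid _ (show s < (t : ℕ) + 1 by omega)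
            (show (t : ℕ) + 1 < r + 2 by omega)).trans (congrArg u (Fin.ext rfl))
  have hAcard : A.card = r + 3 := by
    rw [← himg, Finset.card_image_of_injective _ hgmono.injective]
    simp
  have hsort : A.sort (fun a b => a ≤ b) = List.ofFn g := by
    rw [← himg]
    exact sort_image_ofFn g hgmono
  have hsubS : A ⊆ S := by
    rw [hA]
    intro x hx
    rcases Finset.mem_insert.mp hx with rfl | hx
    · exact hsub _ hNmem
    rcases Finset.mem_insert.mp hx with rfl | hx
    · exact hsub i (hw i)
    · rcases Finset.mem_image.mp hx with ⟨t, -, rfl⟩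
      exact hsub t (hu t)
  set l : List Bool := delSeq chi A with hl
  have hlmap : l = (List.ofFn g).map (fun x => chi (A.erase x)) := by
    rw [hl, delSeq_eq_map, hsort]
  have hlen : l.length = r + 3 := by rw [hlmap]; simp
  have hget : ∀ (t : ℕ) (h : t < r + 3), l[t]'(by omega) = chi (A.erase (g ⟨t, h⟩)) := by
    intro t h
    rw [List.getElem_of_eq hlmap]
    simp only [List.getElem_map, List.getElem_ofFn]
  have hsigA : signChanges l ≤ 1 := hsig A hsubS (by rw [hAcard])
  have hiS : (i : ℕ) + 1 ≤ r + 2 := by omega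
  have h2le : 2 ≤ signChanges l := by
    rcases Nat.lt_or_ge p q with hplt | hpge
    · have hs' : s = (i : ℕ) + 1 := by rw [hs, if_neg (by omega)]
      have e1 : l[(i : ℕ)]'(by omega) = true := by
        rw [hget (i : ℕ) (by omega)]
        have hgi : g ⟨(i : ℕ), by omega⟩ = p :=
          (hg_lo _ (show (i : ℕ) < s by omega)).trans (congrArg u (Fin.ext rfl))
        rw [hgi, herasep, hWw]
      have e2 : l[(i : ℕ)+1]'(by omega) = false := by
        rw [hget ((i : ℕ)+1) (by omega)]
        rw [hg_s _ (show (i : ℕ) + 1 = s by omega), heraseq]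
        exact hWu
      have e3 : l[r+2]'(by omega) = true := by
        rw [hget (r+2) (by omega), hg_hi _ rfl, heraseN, hdir]
        simpa using hplt
      exact two_le_signChanges l (i : ℕ) (r+2) hiS (by omega)
        (by rw [e1, e2]; simp) (by rw [e2, e3]; simp)
    · have hqlt : q < p := by omega
      have hs' : s = (i : ℕ) := by rw [hs, if_pos hqlt]
      have e1 : l[(i : ℕ)]'(by omega) = false := by
        rw [hget (i : ℕ) (by omega)]
        rw [hg_s _ (show (i : ℕ) = s by omega), heraseq]
        exact hWu
      have e2 : l[(i : ℕ)+1]'(by omega) = true := by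
        rw [hget ((i : ℕ)+1) (by omega)]
        have hgi : g ⟨(i : ℕ) + 1, by omega⟩ = p :=
          (hg_mid _ (show s < (i : ℕ) + 1 by omega)
            (show (i : ℕ) + 1 < r + 2 by omega)).trans (congrArg u (Fin.ext rfl))
        rw [hgi, herasep, hWw]
      have e3 : l[r+2]'(by omega) = false := by
        rw [hget (r+2) (by omega), hg_hi _ rfl, heraseN, hdir]
        simp only [decide_eq_false_iff_not]
        omega
      exact two_le_signChanges l (i : ℕ) (r+2) hiS (by omega)
        (by rw [e1, e2]; simp) (by rw [e2, e3]; simp)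
  omega



open Finset Relation

/-- The potential. -/
def phiB {r : ℕ} (chi : Finset ℕ → Bool) (N : ℕ) (v : Fin (r+1) → ℕ) : ℕ :=
  if v (Fin.last r) = N then 1
  else if chi (insert N (Finset.image v Finset.univ)) then 2 else 0

theorem phi_mono {r : ℕ} (S : Finset ℕ) (chi : Finset ℕ → Bool) (C : Fin (r+1) → Finset ℕ)
    (hsig : IsSignotopeOn (r+2) S chi)
    (hord : ∀ i j : Fin (r+1), i < j → ∀ c ∈ C i, ∀ c' ∈ C j, c < c')
    (hsub : ∀ i, C i ⊆ S)
    (hCne : (C (Fin.last r)).Nonempty)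
    (N : ℕ) (hN : N = (C (Fin.last r)).max' hCne)
    (u w : Fin (r+1) → ℕ) (h : blockDir chi C u w) :
    phiB chi N w ≤ phiB chi N u := by
  classical
  obtain ⟨hu, hw, i, hagree, hdisj⟩ := h
  have hne : u i ≠ w i := by
    rcases hdisj with ⟨h1, -⟩ | ⟨h1, -⟩
    · exact ne_of_lt h1
    · exact ne_of_gt h1
  have hdir : chi (insert (w i) (Finset.image u Finset.univ)) = decide (u i < w i) := by
    rcases hdisj with ⟨h1, h2⟩ | ⟨h1, h2⟩
    · rw [h2]; simp [h1]
    · rw [h2]; simp; omega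
  have hwleN : w (Fin.last r) ≤ N := hN ▸ Finset.le_max' _ _ (hw (Fin.last r))
  have huleN : u (Fin.last r) ≤ N := hN ▸ Finset.le_max' _ _ (hu (Fin.last r))
  -- absorption helper
  have habs : u (Fin.last r) ≠ N → w (Fin.last r) ≠ N →
      phiB chi N w ≤ phiB chi N u := by
    intro huN hwN
    unfold phiB
    rw [if_neg huN, if_neg hwN]
    cases hWu : chi (insert N (Finset.image u Finset.univ)) with
    | true =>
      norm_num
      split <;> omega
    | false =>
      cases hWw : chi (insert N (Finset.image w Finset.univ)) with
      | true =>
        exact absurd (absorb S chi C hsig hord hsub hCne N hN u w hu hw i hagree hne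
          huN hwN hdir hWu hWw) (fun h => h.elim)
      | false => simp
  by_cases hiL : i = Fin.last r
  · have hwiN : w i ≤ N := by rw [hiL]; exact hwleN
    have huiN : u i ≤ N := by rw [hiL]; exact huleN
    by_cases huN : u i = N
    · -- going down from the top level
      rcases hdisj with ⟨h1, -⟩ | ⟨h1, h2⟩
      · exfalso; omega
      · have hwN : w i ≠ N := by omega
        have hWw : chi (insert N (Finset.image w Finset.univ)) = false := by
          rw [← huN, ← insert_image_swap u w i hagree]
          exact h2
        unfold phiB
        rw [if_pos (show u (Fin.last r) = N by rw [← hiL]; exact huN),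
          if_neg (show ¬ w (Fin.last r) = N by rw [← hiL]; exact hwN), hWw]
        simp
    · by_cases hwN : w i = N
      · -- going up to the top level
        rcases hdisj with ⟨h1, h2⟩ | ⟨h1, -⟩
        · have hWu : chi (insert N (Finset.image u Finset.univ)) = true := by
            rw [← hwN]; exact h2
          unfold phiB
          rw [if_neg (show ¬ u (Fin.last r) = N by rw [← hiL]; exact huN),
            if_pos (show w (Fin.last r) = N by rw [← hiL]; exact hwN), hWu]
          simp
        · exfalso; omega
      · exact habs (by rw [← hiL]; exact huN) (by rw [← hiL]; exact hwN)
  · have hlast : u (Fin.last r) = w (Fin.last r) := hagree (Fin.last r) (fun h => hiL h.symm)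
    by_cases huN : u (Fin.last r) = N
    · unfold phiB
      rw [if_pos huN, if_pos (hlast ▸ huN)]
    · exact habs huN (hlast ▸ huN)

/-- restrict a cycle to edges with constant potential -/
theorem cycle_eq_phi {α : Type*} (R : α → α → Prop) (φ : α → ℕ)
    (hmono : ∀ a b, R a b → φ b ≤ φ a) {v : α} (hv : TransGen R v v) :
    TransGen (fun a b => R a b ∧ φ a = φ v ∧ φ b = φ v) v v := by
  have hRT : ∀ a b, ReflTransGen R a b → φ b ≤ φ a := by
    intro a b h
    induction h with
    | refl => exact le_refl _
    | tail h e ih => exact le_trans (hmono _ _ e) ih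
  have aux : ∀ a b, TransGen R a b → ReflTransGen R v a → ReflTransGen R b v →
      TransGen (fun a b => R a b ∧ ReflTransGen R v a ∧ ReflTransGen R b v) a b := by
    intro a b h
    induction h with
    | single e => intro hva hbv; exact TransGen.single ⟨e, hva, hbv⟩
    | tail h e ih =>
      intro hva hcv
      exact TransGen.tail (ih hva (ReflTransGen.head e hcv))
        ⟨e, hva.trans h.to_reflTransGen, hcv⟩
  have := aux v v hv ReflTransGen.refl ReflTransGen.refl
  refine TransGen.mono ?_ _ _ this
  rintro a b ⟨e, hva, hbv⟩
  refine ⟨e, le_antisymm (hRT _ _ hva) ?_, le_antisymm ?_ (hRT _ _ hbv)⟩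
  · exact le_trans (hRT _ _ hbv) (hmono _ _ e)
  · exact le_trans (hmono _ _ e) (hRT _ _ hva)

lemma exists_edge_into {α : Type*} {R : α → α → Prop} {v : α}
    (h : TransGen R v v) : ∃ u, R u v := by
  cases h with
  | single h => exact ⟨v, h⟩
  | tail _ e => exact ⟨_, e⟩

lemma image_comp_castSucc {r : ℕ} (a : Fin (r+1) → ℕ) :
    Finset.image a (Finset.univ.erase (Fin.last r)) =
      Finset.image (fun j : Fin r => a (Fin.castSucc j)) Finset.univ := by
  ext x
  simp only [Finset.mem_image, Finset.mem_erase, Finset.mem_univ, true_and, and_true]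
  constructor
  · rintro ⟨j, hj, rfl⟩
    obtain ⟨j', rfl⟩ := Fin.exists_castSucc_eq.mpr hj
    exact ⟨j', rfl⟩
  · rintro ⟨j', rfl⟩
    exact ⟨Fin.castSucc j', Fin.ne_last_of_lt (Fin.castSucc_lt_last j'), rfl⟩




open Finset Relation

lemma sort_insert_max (A : Finset ℕ) (N : ℕ) (h : ∀ a ∈ A, a < N) :
    (insert N A).sort (fun a b => a ≤ b) = A.sort (fun a b => a ≤ b) ++ [N] := by
  have hNA : N ∉ A := fun hmem => lt_irrefl N (h N hmem)
  refine (fun hp h1 h2 => List.Perm.eq_of_pairwise' (r := fun a b : ℕ => a ≤ b) h1 h2 hp) ?_ ?_ ?_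
  · apply List.perm_of_nodup_nodup_toFinset_eq (Finset.sort_nodup _ _)
    · refine List.Nodup.append (Finset.sort_nodup _ _) (List.nodup_singleton N) ?_
      intro a ha hb
      rw [Finset.mem_sort] at ha
      rw [List.mem_singleton] at hb
      exact absurd rfl (ne_of_lt (hb ▸ h a ha))
    · rw [Finset.sort_toFinset, List.toFinset_append, Finset.sort_toFinset]
      simp [Finset.insert_eq, Finset.union_comm, -Finset.union_singleton]
  · exact Finset.pairwise_sort _ _
  · rw [List.pairwise_append]
    refine ⟨Finset.pairwise_sort _ _, List.pairwise_singleton _ _, ?_⟩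
    intro a ha b hb
    rw [Finset.mem_sort] at ha
    rw [List.mem_singleton] at hb
    exact hb ▸ le_of_lt (h a ha)

lemma signotope_insert (r : ℕ) (S : Finset ℕ) (chi : Finset ℕ → Bool) (N : ℕ) (hN : N ∈ S)
    (hsig : IsSignotopeOn (r+1) S chi) :
    IsSignotopeOn r (S.filter (· < N)) (fun X => chi (insert N X)) := by
  intro A hA hcard
  have hAlt : ∀ a ∈ A, a < N := fun a ha => (Finset.mem_filter.mp (hA ha)).2
  have hNA : N ∉ A := fun hmem => lt_irrefl N (hAlt N hmem)
  have hAS : A ⊆ S := fun a ha => (Finset.mem_filter.mp (hA ha)).1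
  have hBsub : insert N A ⊆ S := Finset.insert_subset hN hAS
  have hBcard : (insert N A).card = r + 2 := by
    rw [Finset.card_insert_of_notMem hNA, hcard]
  have h1 := hsig (insert N A) hBsub (by omega)
  have hmap : delSeq chi (insert N A) =
      (delSeq (fun X => chi (insert N X)) A) ++ [chi ((insert N A).erase N)] := by
    rw [delSeq_eq_map, sort_insert_max A N hAlt, List.map_append]
    congr 1
    rw [delSeq_eq_map]
    apply List.map_congr_left
    intro x hx
    rw [Finset.mem_sort] at hx
    rw [Finset.erase_insert_of_ne (fun heq => hNA (by rw [heq]; exact hx))]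
  calc signChanges (delSeq (fun X => chi (insert N X)) A)
      ≤ signChanges ((delSeq (fun X => chi (insert N X)) A) ++ [chi ((insert N A).erase N)]) :=
        signChanges_append_right _ _
    _ = signChanges (delSeq chi (insert N A)) := by rw [hmap]
    _ ≤ 1 := h1

theorem genAux : ∀ (r k : ℕ) (S : Finset ℕ) (chi : Finset ℕ → Bool)
    (C : Fin (r+1) → Finset ℕ),
    IsSignotopeOn (r+2) S chi →
    (∀ i j : Fin (r+1), i < j → ∀ c ∈ C i, ∀ c' ∈ C j, c < c') →
    (∀ i, C i ⊆ S) →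
    (C (Fin.last r)).card ≤ k →
    ∀ v, ¬ Relation.TransGen (blockDir chi C) v v := by
  intro r
  induction r using Nat.strong_induction_on with
  | _ r ihr =>
  intro k
  induction k with
  | zero =>
    intro S chi C hsig hord hsub hcard v hv
    obtain ⟨u, hu⟩ := exists_edge_into hv
    have hmem := hu.2.1 (Fin.last r)
    have hemp : C (Fin.last r) = ∅ := Finset.card_eq_zero.mp (by omega)
    rw [hemp] at hmem
    exact absurd hmem (Finset.notMem_empty _)
  | succ k ihk =>
    intro S chi C hsig hord hsub hcard v hv
    rcases Finset.eq_empty_or_nonempty (C (Fin.last r)) with hemp | hCne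
    · obtain ⟨u, hu⟩ := exists_edge_into hv
      have hmem := hu.2.1 (Fin.last r)
      rw [hemp] at hmem
      exact absurd hmem (Finset.notMem_empty _)
    have hNmem : (C (Fin.last r)).max' hCne ∈ C (Fin.last r) := (C (Fin.last r)).max'_mem hCne
    set N := (C (Fin.last r)).max' hCne with hN
    have hmono : ∀ a b, blockDir chi C a b → phiB chi N b ≤ phiB chi N a :=
      fun a b h => phi_mono S chi C hsig hord hsub hCne N hN a b h
    have hv' := cycle_eq_phi _ (phiB chi N) hmono hv
    by_cases hphi : phiB chi N v = 1
    · -- the cycle lives in the top layer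
      rw [hphi] at hv'
      have hlevel : ∀ a : Fin (r+1) → ℕ, phiB (r := r) chi N a = 1 → a (Fin.last r) = N := by
        intro a ha
        by_contra hne
        unfold phiB at ha
        rw [if_neg hne] at ha
        split at ha <;> omega
      rcases Nat.eq_zero_or_pos r with hr0 | hr0
      · subst hr0
        obtain ⟨u, hu⟩ := exists_edge_into hv'
        obtain ⟨⟨hum, hvm, i, _, hdisj⟩, hpa, hpb⟩ := hu
        have hi : i = Fin.last 0 := Fin.ext (by omega)
        have h1 : u (Fin.last 0) = N := hlevel u hpa
        have h2 : v (Fin.last 0) = N := hlevel v hpb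
        rw [hi] at hdisj
        rcases hdisj with ⟨hlt, -⟩ | ⟨hlt, -⟩ <;> omega
      · obtain ⟨r', rfl⟩ := Nat.exists_eq_succ_of_ne_zero (by omega : r ≠ 0)
        set S' := S.filter (· < N) with hS'
        set chi' := fun X => chi (insert N X) with hchi'
        set C'' := fun j : Fin (r'+1) => C (Fin.castSucc j) with hC''
        have hsig' : IsSignotopeOn (r'+2) S' chi' :=
          signotope_insert (r'+2) S chi N (hsub _ hNmem) hsig
        have hord'' : ∀ i j : Fin (r'+1), i < j → ∀ c ∈ C'' i, ∀ c' ∈ C'' j, c < c' := by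
          intro i j hij c hc c' hc'
          exact hord _ _ (Fin.castSucc_lt_castSucc_iff.mpr hij) c hc c' hc'
        have hsub'' : ∀ i, C'' i ⊆ S' := by
          intro i x hx
          refine Finset.mem_filter.mpr ⟨hsub _ hx, ?_⟩
          exact hord (Fin.castSucc i) (Fin.last (r'+1)) (Fin.castSucc_lt_last i) x hx N hNmem
        have hmap : ∀ a b : Fin (r'+2) → ℕ,
            (blockDir chi C a b ∧ phiB chi N a = 1 ∧ phiB chi N b = 1) →
            blockDir chi' C'' (fun j => a (Fin.castSucc j)) (fun j => b (Fin.castSucc j)) := by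
          rintro a b ⟨⟨ham, hbm, i, hagree, hdisj⟩, hpa, hpb⟩
          have haN : a (Fin.last (r'+1)) = N := hlevel a hpa
          have hbN : b (Fin.last (r'+1)) = N := hlevel b hpb
          have hine : a i ≠ b i := by
            rcases hdisj with ⟨h, -⟩ | ⟨h, -⟩
            exacts [ne_of_lt h, ne_of_gt h]
          have hiL : i ≠ Fin.last (r'+1) := by
            intro h
            subst h
            exact hine (by rw [haN, hbN])
          obtain ⟨i', rfl⟩ := Fin.exists_castSucc_eq.mpr hiL
          have hins : insert N (insert (b (Fin.castSucc i'))
              (Finset.image (fun j : Fin (r'+1) => a (Fin.castSucc j)) Finset.univ)) =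
              insert (b (Fin.castSucc i')) (Finset.image a Finset.univ) := by
            rw [Finset.insert_comm]
            congr 1
            rw [image_eq_insert a (Fin.last (r'+1)), haN, image_comp_castSucc a]
          refine ⟨fun j => ham _, fun j => hbm _, i', ?_, ?_⟩
          · intro j hj
            exact hagree _ (fun h => hj (Fin.castSucc_injective _ h))
          · rcases hdisj with ⟨hlt, hchi⟩ | ⟨hlt, hchi⟩
            · left
              refine ⟨hlt, ?_⟩
              show chi (insert N _) = true
              rw [hins]
              exact hchi
            · right
              refine ⟨hlt, ?_⟩
              show chi (insert N _) = false
              rw [hins]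
              exact hchi
        have hcyc := Relation.TransGen.lift
          (fun (x : Fin (r'+2) → ℕ) (j : Fin (r'+1)) => x (Fin.castSucc j)) hmap _ _ hv'
        exact ihr r' (by omega) ((C'' (Fin.last r')).card) S' chi' C'' hsig' hord'' hsub''
          (le_refl _) _ hcyc
    · -- the cycle avoids the top value N
      have hlevelne : ∀ a : Fin (r+1) → ℕ, phiB chi N a = phiB chi N v →
          a (Fin.last r) ≠ N := by
        intro a ha haN
        apply hphi
        rw [← ha]
        unfold phiB
        rw [if_pos haN]
      classical
      set C' := Function.update C (Fin.last r) ((C (Fin.last r)).erase N) with hC'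
      have hC'sub : ∀ i, C' i ⊆ C i := by
        intro i
        by_cases h : i = Fin.last r
        · subst h
          rw [hC', Function.update_self]
          exact Finset.erase_subset _ _
        · rw [hC', Function.update_of_ne h]
      have hmap : ∀ a b : Fin (r+1) → ℕ,
          (blockDir chi C a b ∧ phiB chi N a = phiB chi N v ∧ phiB chi N b = phiB chi N v) →
          blockDir chi C' a b := by
        rintro a b ⟨⟨ham, hbm, i, hagree, hdisj⟩, hpa, hpb⟩
        have hmem : ∀ (x : Fin (r+1) → ℕ), (∀ j, x j ∈ C j) →
            x (Fin.last r) ≠ N → ∀ j, x j ∈ C' j := by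
          intro x hx hxN j
          by_cases h : j = Fin.last r
          · subst h
            rw [hC', Function.update_self]
            exact Finset.mem_erase.mpr ⟨hxN, hx _⟩
          · rw [hC', Function.update_of_ne h]
            exact hx j
        exact ⟨hmem a ham (hlevelne a hpa), hmem b hbm (hlevelne b hpb), i, hagree, hdisj⟩
      have hcyc := Relation.TransGen.mono hmap _ _ hv'
      refine ihk S chi C' hsig ?_ ?_ ?_ v hcyc
      · intro i j hij c hc c' hc'
        exact hord i j hij c (hC'sub i hc) c' (hC'sub j hc')
      · intro i
        exact (hC'sub i).trans (hsub i)
      · rw [hC', Function.update_self, Finset.card_erase_of_mem hNmem]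
        omega


end BDA

/-- the grid orientation `O_χ` induced by an `(r+1)`-signotope with a block
partition `[n] = C 0 ∪ ⋯ ∪ C (r-1)` is acyclic. -/
theorem blockDir_acyclic (n r : Nat) (chi : Finset Nat -> Bool) (C : Fin r -> Finset Nat)
    (hchi : IsSignotopeOn (r + 1) (Finset.Icc 1 n) chi) (hC : IsBlockPartition n r C) :
    ∀ v : Fin r -> Nat, ¬ Relation.TransGen (blockDir chi C) v v := by
  intro v hv
  cases r with
  | zero =>
    obtain ⟨u, hu⟩ := BDA.exists_edge_into hv
    obtain ⟨-, -, i, -⟩ := hu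
    exact i.elim0
  | succ r =>
    refine BDA.genAux r ((C (Fin.last r)).card) (Finset.Icc 1 n) chi C hchi hC.2 ?_
      (le_refl _) v hv
    intro i x hx
    rw [← hC.1]
    exact Finset.mem_biUnion.mpr ⟨i, Finset.mem_univ _, hx⟩
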